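/- Let l : ℝ × {0,1} → [0,∞) with l(·,0) and l(·,1) convex, and let x ∈ ℝ^m, C > 0, d(θ,y) = (1/2)‖θ‖₂² + C·l(⟨x,θ⟩, y). For θ ∈ ℝ^m and y ∈ (0,1), if z ∈ ℝ satisfies z ∈ ∂l(·,0)(xᵀ(θ − yCxz)) − ∂l(·,1)(xᵀ(θ + (1−y)Cxz)), then θ̂⁰ := θ − yCxz and θ̂¹ := θ + (1−y)Cxz minimize (1−y)d(θ⁰,0) + y d(θ¹,1) subject to (1−y)θ⁰ + yθ¹ = θ. -/

import Mathlib

open Set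

/-- Subdifferential of a convex function `f : ℝ → ℝ` at `r`. -/
def subdiffR (f : ℝ → ℝ) (r : ℝ) : Set ℝ :=
  {v | ∀ z : ℝ, f r + v * (z - r) ≤ f z}

/-- for L2 regularization, the fixed-point condition on `z` yields
the minimizers `θ̂⁰ = θ − yCxz`, `θ̂¹ = θ + (1−y)Cxz` of the weighted infimal
convolution. -/
theorem L2_general_minimizer
    (m : ℕ) (l₀ l₁ : ℝ → ℝ)
    (hl₀ : ConvexOn ℝ univ l₀) (hl₁ : ConvexOn ℝ univ l₁)
    (hl₀0 : ∀ r, 0 ≤ l₀ r) (hl₁0 : ∀ r, 0 ≤ l₁ r)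
    (x : EuclideanSpace ℝ (Fin m)) (C : ℝ) (hC : 0 < C)
    (d : EuclideanSpace ℝ (Fin m) → ℝ → ℝ)
    (hd0 : ∀ θ, d θ 0 = (1 / 2) * ‖θ‖ ^ 2 + C * l₀ (inner ℝ x θ : ℝ))
    (hd1 : ∀ θ, d θ 1 = (1 / 2) * ‖θ‖ ^ 2 + C * l₁ (inner ℝ x θ : ℝ))
    (θ : EuclideanSpace ℝ (Fin m)) (y : ℝ) (hy : y ∈ Ioo (0:ℝ) 1)
    (z : ℝ)
    (hz : ∃ a ∈ subdiffR l₀ (inner ℝ x (θ - (y * C * z) • x) : ℝ),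
          ∃ b ∈ subdiffR l₁ (inner ℝ x (θ + ((1 - y) * C * z) • x) : ℝ),
          z = a - b) :
    ∀ t0 t1 : EuclideanSpace ℝ (Fin m), (1 - y) • t0 + y • t1 = θ →
      (1 - y) * d (θ - (y * C * z) • x) 0 + y * d (θ + ((1 - y) * C * z) • x) 1
        ≤ (1 - y) * d t0 0 + y * d t1 1 := by
  obtain ⟨hy0, hy1⟩ := hy
  obtain ⟨a, ha, b, hb, hzab⟩ := hz
  intro t0 t1 ht
  set θ0 : EuclideanSpace ℝ (Fin m) := θ - (y * C * z) • x with hθ0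
  set θ1 : EuclideanSpace ℝ (Fin m) := θ + ((1 - y) * C * z) • x with hθ1
  set g : EuclideanSpace ℝ (Fin m) := θ + (C * ((1 - y) * a + y * b)) • x with hg
  have hg0 : θ0 + (C * a) • x = g := by
    rw [hθ0, hg, hzab]; module
  have hg1 : θ1 + (C * b) • x = g := by
    rw [hθ1, hg, hzab]; module
  clear_value θ0 θ1 g
  -- subgradient inequalities
  have h1 := ha ((inner ℝ x t0 : ℝ))
  have h2 := hb ((inner ℝ x t1 : ℝ))
  -- norm inequalities
  have n0 : ‖θ0‖ ^ 2 + 2 * (inner ℝ θ0 (t0 - θ0) : ℝ) ≤ ‖t0‖ ^ 2 := by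
    have := @norm_add_sq_real (EuclideanSpace ℝ (Fin m)) _ _ θ0 (t0 - θ0)
    have hn : (0:ℝ) ≤ ‖t0 - θ0‖ ^ 2 := by positivity
    have he : θ0 + (t0 - θ0) = t0 := by abel
    rw [he] at this
    linarith
  have n1 : ‖θ1‖ ^ 2 + 2 * (inner ℝ θ1 (t1 - θ1) : ℝ) ≤ ‖t1‖ ^ 2 := by
    have := @norm_add_sq_real (EuclideanSpace ℝ (Fin m)) _ _ θ1 (t1 - θ1)
    have hn : (0:ℝ) ≤ ‖t1 - θ1‖ ^ 2 := by positivity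
    have he : θ1 + (t1 - θ1) = t1 := by abel
    rw [he] at this
    linarith
  -- key identity
  have hsum : (1 - y) • (t0 - θ0) + y • (t1 - θ1) = (0 : EuclideanSpace ℝ (Fin m)) := by
    rw [hθ0, hθ1, ← ht]; module
  have key : (1 - y) * ((inner ℝ θ0 (t0 - θ0) : ℝ) + C * a * ((inner ℝ x t0 : ℝ) - (inner ℝ x θ0 : ℝ)))
      + y * ((inner ℝ θ1 (t1 - θ1) : ℝ) + C * b * ((inner ℝ x t1 : ℝ) - (inner ℝ x θ1 : ℝ))) = 0 := by
    have e0 : (inner ℝ θ0 (t0 - θ0) : ℝ) + C * a * ((inner ℝ x t0 : ℝ) - (inner ℝ x θ0 : ℝ))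
        = (inner ℝ g (t0 - θ0) : ℝ) := by
      simp only [← hg0, inner_add_left, inner_sub_right, real_inner_smul_left]
      ring
    have e1 : (inner ℝ θ1 (t1 - θ1) : ℝ) + C * b * ((inner ℝ x t1 : ℝ) - (inner ℝ x θ1 : ℝ))
        = (inner ℝ g (t1 - θ1) : ℝ) := by
      simp only [← hg1, inner_add_left, inner_sub_right, real_inner_smul_left]
      ring
    rw [e0, e1]
    have : (inner ℝ g ((1 - y) • (t0 - θ0) + y • (t1 - θ1)) : ℝ) = 0 := by
      rw [hsum, inner_zero_right]
    rw [inner_add_right, real_inner_smul_right, real_inner_smul_right] at this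
    linarith
  rw [hd0, hd0, hd1, hd1]
  have hC0a : 0 ≤ (1 - y) * C := by nlinarith
  have hC0b : 0 ≤ y * C := by nlinarith
  linarith [mul_le_mul_of_nonneg_left h1 hC0a, mul_le_mul_of_nonneg_left h2 hC0b,
    mul_le_mul_of_nonneg_left n0 (by linarith : (0:ℝ) ≤ (1 - y) / 2),
    mul_le_mul_of_nonneg_left n1 (by linarith : (0:ℝ) ≤ y / 2)]
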